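/- arXiv:0909.1984 — 4 statements merged into one kernel-verified Lean document; each statement's English description precedes it below -/
import Mathlib

section
/- Let I be a finite totally ordered alphabet and m ≥ 1. For r = 1,…,m let i⁽ʳ⁾ and j⁽ʳ⁾ be words of the same length d_r with i⁽ʳ⁾ ≤ j⁽ʳ⁾ in lexicographic order. Then the lexicographically largest shuffle of i⁽¹⁾,…,i⁽ᵐ⁾ is less than or equal to the lexicographically largest shuffle of j⁽¹⁾,…,j⁽ᵐ⁾. If in addition the strict inequality i⁽ʳ⁾ < j⁽ʳ⁾ holds for at least one r, then the lexicographically largest shuffle of i⁽¹⁾,…,i⁽ᵐ⁾ is strictly smaller than that of j⁽¹⁾,…,j⁽ᵐ⁾. -/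
/-- `a` and `b` lie in the same consecutive block determined by the list of
block lengths `ds` (block `r` occupies positions `[(ds.take r).sum, (ds.take (r+1)).sum)`). -/
def SameBlock (ds : List ℕ) (a b : ℕ) : Prop :=
  ∃ r < ds.length, (ds.take r).sum ≤ a ∧ a < (ds.take (r + 1)).sum ∧
    (ds.take r).sum ≤ b ∧ b < (ds.take (r + 1)).sum

/-- A shuffle permutation for the block lengths `ds`: a permutation of the positions of the
concatenation whose inverse is strictly increasing on each consecutive block. -/
def IsShufflePerm (ds : List ℕ) (σ : Equiv.Perm (Fin ds.sum)) : Prop :=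
  ∀ a b : Fin ds.sum, SameBlock ds a b → a < b → σ⁻¹ a < σ⁻¹ b

/-- The set of all shuffles (interleavings) of the words in the list `ws`: the words
`(u_{σ(1)}, …, u_{σ(d)})` produced by shuffle permutations `σ` applied to the concatenation. -/
def shuffles {I : Type*} (ws : List (List I)) : Set (List I) :=
  { w | ∃ σ : Equiv.Perm (Fin ((ws.map List.length).sum)),
      IsShufflePerm (ws.map List.length) σ ∧
      w = List.ofFn fun p => ws.flatten.get ((σ p).cast (List.length_flatten : ws.flatten.length = (ws.map List.length).sum).symm) }

section Aux
variable {I : Type*} [LinearOrder I]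

lemma aux_ofFn_le : ∀ (n : ℕ) (f g : Fin n → I),
    (∀ p : Fin n, (∀ q, q < p → f q = g q) → f p ≤ g p) →
    List.ofFn f ≤ List.ofFn g ∧ ((∃ p, f p ≠ g p) → List.ofFn f < List.ofFn g)
  | 0, f, g, _ => by
      refine ⟨by simp, ?_⟩
      rintro ⟨p, -⟩; exact absurd p.isLt (by simp)
  | n+1, f, g, H => by
      have h0 : f 0 ≤ g 0 := H 0 (fun q hq => absurd hq (by simp [Fin.lt_def]))
      rw [List.ofFn_succ, List.ofFn_succ]
      rcases lt_or_eq_of_le h0 with hlt | heq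
      · have : (f 0 :: List.ofFn fun i => f i.succ) < (g 0 :: List.ofFn fun i => g i.succ) :=
          List.Lex.rel hlt
        exact ⟨le_of_lt this, fun _ => this⟩
      · have IH := aux_ofFn_le n (fun i => f i.succ) (fun i => g i.succ) (by
          intro p hpre
          refine H p.succ (fun q hq => ?_)
          cases q using Fin.cases with
          | zero => exact heq
          | succ q' => exact hpre q' (by rwa [Fin.succ_lt_succ_iff] at hq))
        constructor
        · rcases lt_or_eq_of_le IH.1 with h | h
          · exact le_of_lt (heq ▸ List.Lex.cons h)
          · rw [h, heq]
        · rintro ⟨p, hp⟩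
          cases p using Fin.cases with
          | zero => exact absurd heq hp
          | succ q' =>
            exact heq ▸ List.Lex.cons (IH.2 ⟨q', hp⟩)

lemma aux_le_getElem : ∀ (t : ℕ) (l₁ l₂ : List I), l₁.length = l₂.length → l₁ ≤ l₂ →
    l₁.take t = l₂.take t →
    ∀ (h1 : t < l₁.length) (h2 : t < l₂.length), l₁[t] ≤ l₂[t]
  | t, [], l₂, _, _, _ => by intro h1; exact absurd h1 (by simp)
  | t, a::l, [], hl, _, _ => by simp at hl
  | 0, a::l, b::l', _, hle, _ => by
      intro _ _
      rcases lt_or_eq_of_le hle with h | h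
      · cases h with
        | rel h => exact le_of_lt h
        | cons h => exact le_rfl
      · simp_all
  | t+1, a::l, b::l', hl, hle, htake => by
      intro h1 h2
      simp only [List.take_succ_cons, List.cons.injEq] at htake
      obtain ⟨rfl, htk⟩ := htake
      have hll : l ≤ l' := by
        rcases lt_or_eq_of_le hle with h | h
        · cases h with
          | rel h => exact absurd h (lt_irrefl _)
          | cons h => exact le_of_lt h
        · simp_all
      exact aux_le_getElem t l l' (by simpa using hl) hll htk (by simpa using h1) (by simpa using h2)

omit [LinearOrder I] in
lemma aux_getElem_flatten : ∀ (L : List (List I)) (r t : ℕ) (hr : r < L.length)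
    (ht : t < L[r].length) (h : ((L.map List.length).take r).sum + t < L.flatten.length),
    L.flatten[((L.map List.length).take r).sum + t] = L[r][t]
  | a :: L', 0, t, hr, ht, h => by
      simp only [List.take_zero, List.sum_nil, Nat.zero_add, List.flatten_cons]
      exact List.getElem_append_left (by simpa using ht)
  | a :: L', r+1, t, hr, ht, h => by
      have hs : ((( a:: L').map List.length).take (r+1)).sum
          = a.length + (((L'.map List.length)).take r).sum := by
        simp [List.take_succ_cons]
      simp only [hs, Nat.add_assoc, List.flatten_cons]
      rw [List.getElem_append_right (Nat.le_add_right _ _)]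
      simp only [Nat.add_sub_cancel_left, List.getElem_cons_succ]
      exact aux_getElem_flatten L' r t (by simpa using hr) (by simpa using ht)
        (by simp only [List.flatten_cons, List.length_append] at h; omega)

omit [LinearOrder I] in
lemma aux_flatten_block {m : ℕ} (w : Fin m → List I) (ds : List ℕ)
    (hds : (List.ofFn w).map List.length = ds) (r : Fin m) (t : ℕ) (ht : t < (w r).length)
    (h : (ds.take r.val).sum + t < (List.ofFn w).flatten.length) :
    (List.ofFn w).flatten[(ds.take r.val).sum + t] = (w r)[t] := by
  subst hds
  have hr : r.val < (List.ofFn w).length := by simp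
  rw [aux_getElem_flatten (List.ofFn w) r.val t hr (by simpa using ht) h]
  simp only [List.getElem_ofFn, Fin.eta]

lemma aux_exists_block : ∀ (ds : List ℕ) (a : ℕ), a < ds.sum →
    ∃ r < ds.length, (ds.take r).sum ≤ a ∧ a < (ds.take (r+1)).sum
  | [], a, h => by simp at h
  | d :: ds, a, h => by
      rcases Nat.lt_or_ge a d with hlt | hge
      · exact ⟨0, by simp, by simp, by simpa using hlt⟩
      · obtain ⟨r, hr, h1, h2⟩ := aux_exists_block ds (a - d) (by simp at h; omega)
        refine ⟨r+1, by simpa using hr, ?_, ?_⟩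
        · simp only [List.take_succ_cons, List.sum_cons]; omega
        · simp only [List.take_succ_cons, List.sum_cons]; omega

omit [LinearOrder I] in
lemma aux_ne_getElem {l₁ l₂ : List I} (hl : l₁.length = l₂.length) (h : l₁ ≠ l₂) :
    ∃ t, ∃ (h1 : t < l₁.length) (h2 : t < l₂.length), l₁[t] ≠ l₂[t] := by
  by_contra hc
  push_neg at hc
  exact h (List.ext_getElem hl (fun t h1 h2 => hc t h1 h2))

lemma aux_block_lt_sum (ds : List ℕ) (r t : ℕ) (hr : r < ds.length) (ht : t < ds[r]) :
    (ds.take r).sum + t < ds.sum := by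
  have h1 := List.sum_take_succ ds r hr
  have h2 := List.sum_take_add_sum_drop ds (r+1)
  omega

omit [LinearOrder I] in
lemma aux_mem_shuffles (ws : List (List I)) (ds : List ℕ)
    (hds : ws.map List.length = ds) (σ : Equiv.Perm (Fin ds.sum))
    (hσ : IsShufflePerm ds σ) :
    (List.ofFn fun p : Fin ds.sum => ws.flatten.get ⟨(σ p).val, by
        rw [List.length_flatten, hds]; exact (σ p).isLt⟩) ∈ shuffles ws := by
  subst hds
  exact ⟨σ, hσ, rfl⟩

end Aux

/-- If `i⁽ʳ⁾ ≤ j⁽ʳ⁾` are words of the same length for `r = 1, …, m`, then the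
lexicographically largest shuffle of the `i⁽ʳ⁾` is `≤` the lexicographically largest shuffle of
the `j⁽ʳ⁾`; and if moreover `i⁽ʳ⁾ < j⁽ʳ⁾` for some `r`, the inequality of largest shuffles
is strict. -/
theorem largest_shuffle_mono {I : Type*} [Fintype I] [LinearOrder I] {m : ℕ} (hm : 1 ≤ m)
    (iw jw : Fin m → List I)
    (hlen : ∀ r, (iw r).length = (jw r).length)
    (hle : ∀ r, iw r ≤ jw r)
    (Mi Mj : List I)
    (hMi : IsGreatest (shuffles (List.ofFn iw)) Mi)
    (hMj : IsGreatest (shuffles (List.ofFn jw)) Mj) :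
    Mi ≤ Mj ∧ ((∃ r, iw r < jw r) → Mi < Mj) := by
  classical
  obtain ⟨hMi1, hMi2⟩ := hMi
  obtain ⟨hMj1, hMj2⟩ := hMj
  set ds : List ℕ := (List.ofFn iw).map List.length with hdsdef
  obtain ⟨σ, hσ, hMiEq⟩ := hMi1
  have hdj : (List.ofFn jw).map List.length = ds := by
    rw [hdsdef, List.map_ofFn, List.map_ofFn]
    exact congrArg List.ofFn (funext fun r => ((hlen r).symm : (jw r).length = (iw r).length))
  have hdsi : (List.ofFn iw).map List.length = ds := rfl
  have hul : (List.ofFn iw).flatten.length = ds.sum := List.length_flatten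
  have hvl : (List.ofFn jw).flatten.length = ds.sum := by
    rw [List.length_flatten, hdj]
  have hdlen : ds.length = m := by simp [hdsdef]
  -- the two interleavings by the same permutation
  set f : Fin ds.sum → I :=
    fun p => (List.ofFn iw).flatten.get ((σ p).cast hul.symm) with hf
  set g : Fin ds.sum → I :=
    fun p => (List.ofFn jw).flatten.get ((σ p).cast hvl.symm) with hg
  -- value computations
  have hfval : ∀ (r : Fin m) (t : ℕ) (ht : t < (iw r).length) (p : Fin ds.sum)
      (hp : (σ p).val = (ds.take r.val).sum + t), f p = (iw r)[t] := by
    intro r t ht p hp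
    have : (σ p).cast hul.symm = ⟨(ds.take r.val).sum + t, by rw [hul, ← hp]; exact (σ p).isLt⟩ :=
      Fin.ext (by simpa using hp)
    rw [hf]
    simp only [this, List.get_eq_getElem]
    exact aux_flatten_block iw ds hdsi r t ht _
  have hgval : ∀ (r : Fin m) (t : ℕ) (ht : t < (jw r).length) (p : Fin ds.sum)
      (hp : (σ p).val = (ds.take r.val).sum + t), g p = (jw r)[t] := by
    intro r t ht p hp
    have : (σ p).cast hvl.symm = ⟨(ds.take r.val).sum + t, by rw [hvl, ← hp]; exact (σ p).isLt⟩ :=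
      Fin.ext (by simpa using hp)
    rw [hg]
    simp only [this, List.get_eq_getElem]
    exact aux_flatten_block jw ds hdj r t ht _
  -- key pointwise comparison
  have key : ∀ p : Fin ds.sum, (∀ q, q < p → f q = g q) → f p ≤ g p := by
    intro p hpre
    obtain ⟨r, hr, h1, h2⟩ := aux_exists_block ds (σ p).val (σ p).isLt
    set r' : Fin m := ⟨r, hdlen ▸ hr⟩ with hr'
    have hdr : ds[r] = (iw r').length := by
      simp [hdsdef, hr', List.getElem_ofFn]
    have hsum : (ds.take (r+1)).sum = (ds.take r).sum + ds[r] := List.sum_take_succ ds r hr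
    set t : ℕ := (σ p).val - (ds.take r).sum with htdef
    have htlt : t < (iw r').length := by rw [← hdr]; omega
    have hp : (σ p).val = (ds.take r).sum + t := by omega
    have hfp : f p = (iw r')[t] := hfval r' t htlt p hp
    have hgp : g p = (jw r')[t]'(by rw [← hlen r']; exact htlt) :=
      hgval r' t (by rw [← hlen r']; exact htlt) p hp
    rw [hfp, hgp]
    refine aux_le_getElem t (iw r') (jw r') (hlen r') (hle r') ?_ htlt (by rw [← hlen r']; exact htlt)
    -- prefixes agree because earlier positions of the block occur earlier in the output
    refine List.ext_getElem (by simp [hlen r']) ?_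
    intro s hs1 hs2
    have hslt : s < t := by rw [List.length_take] at hs1; omega
    rw [List.getElem_take, List.getElem_take]
    -- the position of offset s in block r
    have hblt : (ds.take r).sum + s < ds.sum :=
      aux_block_lt_sum ds r s hr (by rw [hdr]; omega)
    have hsb : SameBlock ds ((ds.take r).sum + s) (σ p).val :=
      ⟨r, hr, Nat.le_add_right _ _, by omega, h1, h2⟩
    have hq : σ⁻¹ (⟨(ds.take r).sum + s, hblt⟩ : Fin ds.sum) < p := by
      have h := hσ ⟨(ds.take r).sum + s, hblt⟩ (σ p) hsb
        (show ((ds.take r).sum + s) < ((σ p) : ℕ) by omega)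
      simpa using h
    set b : Fin ds.sum := ⟨(ds.take r).sum + s, hblt⟩ with hbdef
    have heq := hpre (σ⁻¹ b) hq
    have hσb : (σ (σ⁻¹ b)).val = (ds.take r).sum + s := by
      rw [← Equiv.Perm.mul_apply, mul_inv_cancel, Equiv.Perm.one_apply]
    have hf' : f (σ⁻¹ b) = (iw r')[s]'(by omega) :=
      hfval r' s (by omega) _ hσb
    have hg' : g (σ⁻¹ b) = (jw r')[s]'(by rw [← hlen r']; omega) :=
      hgval r' s (by rw [← hlen r']; omega) _ hσb
    rw [hf', hg'] at heq
    exact heq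
  obtain ⟨hle', hlt'⟩ := aux_ofFn_le ds.sum f g key
  have hwj : List.ofFn g ∈ shuffles (List.ofFn jw) := aux_mem_shuffles _ ds hdj σ hσ
  have hgj : List.ofFn g ≤ Mj := hMj2 hwj
  have hMifle : Mi = List.ofFn f := hMiEq
  constructor
  · calc Mi = List.ofFn f := hMifle
      _ ≤ List.ofFn g := hle'
      _ ≤ Mj := hgj
  · rintro ⟨r, hrlt⟩
    obtain ⟨t, ht1, ht2, htne⟩ := aux_ne_getElem (hlen r) (ne_of_lt hrlt)
    have hrd : (r : ℕ) < ds.length := by omega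
    have hdr : ds[(r : ℕ)] = (iw r).length := by
      simp [hdsdef, List.getElem_ofFn]
    have hblt : (ds.take (r : ℕ)).sum + t < ds.sum :=
      aux_block_lt_sum ds r t hrd (by rw [hdr]; exact ht1)
    set b : Fin ds.sum := ⟨(ds.take (r : ℕ)).sum + t, hblt⟩ with hbdef
    have hσb : (σ (σ⁻¹ b)).val = (ds.take (r : ℕ)).sum + t := by
      rw [← Equiv.Perm.mul_apply, mul_inv_cancel, Equiv.Perm.one_apply]

    have hf' : f (σ⁻¹ b) = (iw r)[t] := hfval r t ht1 _ hσb
    have hg' : g (σ⁻¹ b) = (jw r)[t] := hgval r t ht2 _ hσb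
    have hdiff : f (σ⁻¹ b) ≠ g (σ⁻¹ b) := by rw [hf', hg']; exact htne
    calc Mi = List.ofFn f := hMifle
      _ < List.ofFn g := hlt' ⟨σ⁻¹ b, hdiff⟩
      _ ≤ Mj := hgj
end

section
/- Let I be a finite totally ordered alphabet and let i, j, k, l be words over I such that i and k are nonempty, l = jk (concatenation), l is a Lyndon word, and i ≤ l in lexicographic order. Then the concatenation j i k is lexicographically strictly smaller than the concatenation l i, unless j is empty and k = l = i (in which case j i k equals l i). -/
/-- A nonempty word is Lyndon if it is lexicographically strictly smaller than each of its
proper nonempty suffixes. -/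
def IsLyndonWord {I : Type*} [LinearOrder I] (l : List I) : Prop :=
  l ≠ [] ∧ ∀ t s : List I, t ≠ [] → s ≠ [] → l = t ++ s → l < s

lemma lex_append_left' {I : Type*} [LinearOrder I] (u : List I) {s t : List I} (h : s < t) :
    u ++ s < u ++ t := by
  induction u with
  | nil => simpa
  | cons a u ih =>
    simp only [List.cons_append]
    show List.Lex (· < ·) (a :: (u ++ s)) (a :: (u ++ t))
    exact List.Lex.cons ih

lemma lex_diff' {I : Type*} [LinearOrder I] (u : List I) {a b : I} {s t : List I} (h : a < b) :
    u ++ a :: s < u ++ b :: t := by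
  apply lex_append_left'
  show List.Lex (· < ·) (a :: s) (b :: t)
  exact List.Lex.rel h

lemma lex_cases' {I : Type*} [LinearOrder I] {i m : List I} (h : i < m) :
    (∃ m', m' ≠ [] ∧ m = i ++ m') ∨
      ∃ u a b s t, a < b ∧ i = u ++ a :: s ∧ m = u ++ b :: t := by
  have h' : List.Lex (· < ·) i m := h
  clear h
  induction h' with
  | nil => exact Or.inl ⟨_ :: _, by simp, rfl⟩
  | @cons a l₁ l₂ h ih =>
    rcases ih with ⟨m', hne, rfl⟩ | ⟨u, x, y, s, t, hxy, rfl, rfl⟩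
    · exact Or.inl ⟨m', hne, rfl⟩
    · exact Or.inr ⟨a :: u, x, y, s, t, hxy, rfl, rfl⟩
  | rel hab => exact Or.inr ⟨[], _, _, _, _, hab, rfl, rfl⟩

lemma lyndon_key {I : Type*} [LinearOrder I] {l : List I} (hLyn : IsLyndonWord l)
    {i : List I} (hi : i ≠ []) (hil : i ≤ l) :
    ∀ n (m : List I), m.length ≤ n → m ≠ [] → (∃ p, l = p ++ m) → i < m →
      i ++ m < m ++ i := by
  intro n
  induction n with
  | zero =>
    intro m hlen hne
    cases m with
    | nil => exact absurd rfl hne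
    | cons a m => simp at hlen
  | succ n ih =>
    rintro m hlen hne ⟨p, hp⟩ him
    rcases lex_cases' him with ⟨m', hm'ne, rfl⟩ | ⟨u, a, b, s, t, hab, rfl, rfl⟩
    · -- m = i ++ m'
      have hlm' : l < m' := by
        apply hLyn.2 (p ++ i) m' _ hm'ne
        · rw [hp, List.append_assoc]
        · simp [hi]
      have him' : i < m' := lt_of_le_of_lt hil hlm'
      have hlen' : m'.length ≤ n := by
        have : 1 ≤ i.length := List.length_pos_iff.2 hi
        simp only [List.length_append] at hlen
        omega
      have hrec : i ++ m' < m' ++ i :=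
        ih m' hlen' hm'ne ⟨p ++ i, by rw [hp, List.append_assoc]⟩ him'
      calc i ++ (i ++ m') < i ++ (m' ++ i) := lex_append_left' i hrec
        _ = (i ++ m') ++ i := by rw [List.append_assoc]
    · calc (u ++ a :: s) ++ (u ++ b :: t) = u ++ a :: (s ++ (u ++ b :: t)) := by simp
        _ < u ++ b :: (t ++ (u ++ a :: s)) := lex_diff' u hab
        _ = (u ++ b :: t) ++ (u ++ a :: s) := by simp

/-- Let `i, j, k, l` be words with `i` and `k` nonempty, `l = j ++ k`,
`l` Lyndon, and `i ≤ l`.  Then `j ++ i ++ k < l ++ i`, unless `j` is empty and `k = l = i`,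
in which case the two words are equal. -/
theorem lyndon_insertion {I : Type*} [Fintype I] [LinearOrder I] (i j k l : List I)
    (hi : i ≠ []) (hk : k ≠ []) (hl : l = j ++ k)
    (hLyn : IsLyndonWord l) (hil : i ≤ l) :
    (¬(j = [] ∧ k = i ∧ l = i) → j ++ i ++ k < l ++ i) ∧
    ((j = [] ∧ k = i ∧ l = i) → j ++ i ++ k = l ++ i) := by
  constructor
  · intro hne
    have hik : i < k := by
      by_cases hj : j = []
      · have hlk : l = k := by rw [hl, hj, List.nil_append]
        have : k ≠ i := by
          intro h
          exact hne ⟨hj, h, by rw [hlk, h]⟩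
        exact lt_of_le_of_ne (hlk ▸ hil) (fun h => this h.symm)
      · exact lt_of_le_of_lt hil (hLyn.2 j k hj hk hl)
    have hmain := lyndon_key hLyn hi hil k.length k le_rfl hk ⟨j, hl⟩ hik
    rw [hl, List.append_assoc, List.append_assoc]
    exact lex_append_left' j hmain
  · rintro ⟨rfl, rfl, hl'⟩
    simp [hl']
end

section
/- Let F be a field, ℓ ≥ 2, and consider the Khovanov–Lauda–Rouquier algebra R_α of type B_ℓ (with the Cartan datum I = {1,…,ℓ}, 1·1 = 2, i·i = 4 for i ≥ 2, 1·2 = −2, i·(i+1) = −2 for i ≥ 2, i·j = 0 if |i−j| ≥ 2, and the natural total order 1 < 2 < ⋯ < ℓ, so that in particular Q_{1,2}(u,v) = u² − v), where α = 2α_1 + α_2 + ⋯ + α_n for some 2 ≤ n ≤ ℓ and d = n + 1. Then the following formulas define a representation of R_α on the two-dimensional F-vector space with basis {v_1, v_{−1}}: e(j) v_a = v_a if j = (1,1,2,3,…,n) and e(j) v_a = 0 otherwise (a = ±1); y_r v_1 = 0 for 1 ≤ r ≤ d; y_1 v_{−1} = −v_1, y_2 v_{−1} = v_1, and y_s v_{−1}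 = 0 for 3 ≤ s ≤ d; ψ_1 v_1 = v_{−1}, ψ_r v_1 = 0 for 2 ≤ r < d, and ψ_s v_{−1} = 0 for 1 ≤ s < d. -/
/-- The multiset of letters (weight) of a word `w : Fin d → Fin ℓ`; two words have the same
`countWt` iff they have the same weight `α ∈ Q₊`. -/
def countWt {d ℓ : ℕ} (w : Fin d → Fin ℓ) : Fin ℓ → ℕ :=
  fun i => (Finset.univ.filter fun p => w p = i).card

/-- The polynomial `Q_{ij}(u,v)` of type `B_ℓ` (natural order, letters `0, …, ℓ-1` standing
for `1, …, ℓ`; `1·1 = 2`, `i·i = 4` for `i ≥ 2`, `1·2 = −2`, `i·(i+1) = −2` for `i ≥ 2`),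
evaluated at a pair of commuting ring elements: `Q_{1,2}(u,v) = u² − v`,
`Q_{2,1}(u,v) = −u + v²`, `Q_{i,i+1}(u,v) = u − v` and `Q_{i+1,i}(u,v) = −u + v` for `i ≥ 2`,
`Q_{ii} = 0`, and `Q_{ij} = 1` when `i·j = 0`. -/
def QB {ℓ : ℕ} {M : Type*} [Ring M] (i j : Fin ℓ) (u v : M) : M :=
  if i = j then 0
  else if (i : ℕ) = 0 ∧ (j : ℕ) = 1 then u ^ 2 - v
  else if (i : ℕ) = 1 ∧ (j : ℕ) = 0 then v ^ 2 - u
  else if (i : ℕ) + 1 = (j : ℕ) then u - v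
  else if (j : ℕ) + 1 = (i : ℕ) then v - u
  else 1

/-- The polynomial `(Q_{ij}(w,v) - Q_{ij}(u,v))/(w - u)` of type `B_ℓ` (computed first as a
polynomial), evaluated at `u = y_r`, `w = y_{r+2}`: it is `w + u` for `(i,j) = (1,2)`,
`1` if `j = i + 1` with `i ≥ 2`, `-1` if `i = j + 1`, and `0` otherwise. -/
def QBder {ℓ : ℕ} {M : Type*} [Ring M] (i j : Fin ℓ) (u w : M) : M :=
  if i = j then 0
  else if (i : ℕ) = 0 ∧ (j : ℕ) = 1 then w + u
  else if (i : ℕ) + 1 = (j : ℕ) then 1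
  else if (j : ℕ) + 1 = (i : ℕ) then -1
  else 0


lemma end_ext2 {F : Type*} [Field F] (f g : Module.End F (F × F))
    (h1 : f ((1:F), (0:F)) = g ((1:F), (0:F))) (h2 : f ((0:F), (1:F)) = g ((0:F), (1:F))) :
    f = g := by
  apply LinearMap.ext
  intro x
  have hx : x = x.1 • (((1:F),(0:F)) : F × F) + x.2 • (((0:F),(1:F)) : F × F) := by
    simp [Prod.ext_iff]
  rw [hx, map_add, map_add, map_smul, map_smul, map_smul, map_smul, h1, h2]

/-- For the KLR algebra `R_α` of type `B_ℓ` with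
`α = 2α_1 + α_2 + ⋯ + α_n` (`2 ≤ n ≤ ℓ`, `d = n + 1`), the formulas
`e((1,1,2,…,n)) ↦ id`, `e(j) ↦ 0` for other `j ∈ W^α`; `y_r v₁ = 0`; `y_1 v₋₁ = -v₁`,
`y_2 v₋₁ = v₁`, `y_s v₋₁ = 0` for `s ≥ 3`; `ψ_1 v₁ = v₋₁`, `ψ_r v₁ = 0` for `r ≥ 2`,
`ψ_s v₋₁ = 0`, define a representation of `R_α` on the two-dimensional space `F × F`
with basis `v₁ = (1,0)`, `v₋₁ = (0,1)`, i.e. satisfy all the defining relations of `R_α`.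
(Letters are `0`-indexed: letter `k ∈ {1, …, ℓ}` is `⟨k-1, _⟩ : Fin ℓ`; `y_1, …, y_d` are
`Y 0, …, Y (d-1)` and `ψ_1, …, ψ_{d-1}` are `P 0, …, P (d-2)`.) -/
theorem KLR_typeB_cuspidal_two_dimensional (F : Type*) [Field F] (ℓ n : ℕ)
    (hℓ : 2 ≤ ℓ) (hn2 : 2 ≤ n) (hn : n ≤ ℓ)
    (d : ℕ) (hd : d = n + 1)
    (w₀ : Fin d → Fin ℓ)
    (hw₀ : ∀ p : Fin d, (w₀ p : ℕ) = if (p : ℕ) ≤ 1 then 0 else (p : ℕ) - 1)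
    (E : (Fin d → Fin ℓ) → Module.End F (F × F))
    (hE : ∀ w, E w = if w = w₀ then 1 else 0)
    (Y P : ℕ → Module.End F (F × F))
    (hYv1 : ∀ r, r < d → Y r ((1 : F), (0 : F)) = 0)
    (hY0 : Y 0 ((0 : F), (1 : F)) = (-1, 0))
    (hY1 : Y 1 ((0 : F), (1 : F)) = (1, 0))
    (hYs : ∀ s, 2 ≤ s → s < d → Y s ((0 : F), (1 : F)) = 0)
    (hP0 : P 0 ((1 : F), (0 : F)) = (0, 1))
    (hPr : ∀ r, 1 ≤ r → r + 1 < d → P r ((1 : F), (0 : F)) = 0)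
    (hPs : ∀ s, s + 1 < d → P s ((0 : F), (1 : F)) = 0) :
    -- e(i) e(j) = δ_{i,j} e(i)
    (∀ w w' : Fin d → Fin ℓ, countWt w = countWt w₀ → countWt w' = countWt w₀ →
      E w * E w' = if w = w' then E w else 0) ∧
    -- Σ_{i ∈ W^α} e(i) = 1
    (∑ w ∈ Finset.univ.filter (fun w : Fin d → Fin ℓ => countWt w = countWt w₀), E w = 1) ∧
    -- y_r e(i) = e(i) y_r
    (∀ r, r < d → ∀ w : Fin d → Fin ℓ, countWt w = countWt w₀ →
      Y r * E w = E w * Y r) ∧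
    -- ψ_r e(i) = e(s_r i) ψ_r
    (∀ r, ∀ hr : r + 1 < d, ∀ w : Fin d → Fin ℓ, countWt w = countWt w₀ →
      P r * E w = E (w ∘ Equiv.swap (⟨r, by omega⟩ : Fin d) ⟨r + 1, hr⟩) * P r) ∧
    -- y_r y_s = y_s y_r
    (∀ r s, r < d → s < d → Y r * Y s = Y s * Y r) ∧
    -- y_r ψ_s = ψ_s y_r for r ≠ s, s+1
    (∀ r s, r < d → s + 1 < d → r ≠ s → r ≠ s + 1 → Y r * P s = P s * Y r) ∧
    -- (y_{r+1} ψ_r - ψ_r y_r) e(i)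
    (∀ r, ∀ hr : r + 1 < d, ∀ w : Fin d → Fin ℓ, countWt w = countWt w₀ →
      (Y (r + 1) * P r - P r * Y r) * E w =
        if w (⟨r, by omega⟩ : Fin d) = w ⟨r + 1, hr⟩ then E w else 0) ∧
    -- (y_r ψ_r - ψ_r y_{r+1}) e(i)
    (∀ r, ∀ hr : r + 1 < d, ∀ w : Fin d → Fin ℓ, countWt w = countWt w₀ →
      (Y r * P r - P r * Y (r + 1)) * E w =
        if w (⟨r, by omega⟩ : Fin d) = w ⟨r + 1, hr⟩ then -E w else 0) ∧
    -- ψ_r² e(i) = Q_{i_r, i_{r+1}}(y_r, y_{r+1}) e(i)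
    (∀ r, ∀ hr : r + 1 < d, ∀ w : Fin d → Fin ℓ, countWt w = countWt w₀ →
      P r * P r * E w =
        QB (w (⟨r, by omega⟩ : Fin d)) (w ⟨r + 1, hr⟩) (Y r) (Y (r + 1)) * E w) ∧
    -- ψ_r ψ_s = ψ_s ψ_r for |r - s| > 1
    (∀ r s, r + 1 < d → s + 1 < d → (r + 1 < s ∨ s + 1 < r) → P r * P s = P s * P r) ∧
    -- braid relation
    (∀ r, ∀ hr : r + 2 < d, ∀ w : Fin d → Fin ℓ, countWt w = countWt w₀ →
      (P (r + 1) * P r * P (r + 1) - P r * P (r + 1) * P r) * E w =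
        if w (⟨r, by omega⟩ : Fin d) = w ⟨r + 2, hr⟩ then
          QBder (w (⟨r, by omega⟩ : Fin d)) (w (⟨r + 1, by omega⟩ : Fin d))
            (Y r) (Y (r + 2)) * E w
        else 0) := by

  have hd3 : 3 ≤ d := by omega
  -- w₀ value facts
  have hval : ∀ (r : ℕ) (h : r < d), (w₀ ⟨r, h⟩ : ℕ) = if r ≤ 1 then 0 else r - 1 :=
    fun r h => hw₀ ⟨r, h⟩
  have h01 : w₀ ⟨0, by omega⟩ = w₀ ⟨1, by omega⟩ := by
    apply Fin.ext
    rw [hval 0 (by omega), hval 1 (by omega)]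
    norm_num
  have hw_ne : ∀ (p q : Fin d), ¬((p:ℕ) ≤ 1 ∧ (q:ℕ) ≤ 1) → (p:ℕ) ≠ (q:ℕ) → w₀ p ≠ w₀ q := by
    intro p q h1 h2 h
    have := congrArg Fin.val h
    rw [hw₀ p, hw₀ q] at this
    split_ifs at this <;> omega
  -- zero operators
  have hPz : ∀ r, 1 ≤ r → r + 1 < d → P r = 0 := by
    intro r h1 h2
    apply end_ext2
    · rw [hPr r h1 h2]; rfl
    · rw [hPs r h2]; rfl
  have hYz : ∀ s, 2 ≤ s → s < d → Y s = 0 := by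
    intro s h1 h2
    apply end_ext2
    · rw [hYv1 s h2]; rfl
    · rw [hYs s h1 h2]; rfl
  have hY0' : Y 0 ((0:F), (1:F)) = -(((1:F),(0:F)) : F × F) := by
    rw [hY0, Prod.neg_mk, neg_zero]
  have hYY : ∀ r s, r < d → s < d → Y r * Y s = 0 := by
    intro r s hr hs
    apply end_ext2
    · rw [Module.End.mul_apply, hYv1 s hs, map_zero, LinearMap.zero_apply]
    · rcases Nat.lt_or_ge s 2 with h | h
      · interval_cases s
        · rw [Module.End.mul_apply, hY0', map_neg, hYv1 r hr, neg_zero, LinearMap.zero_apply]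
        · rw [Module.End.mul_apply, hY1, hYv1 r hr, LinearMap.zero_apply]
      · rw [Module.End.mul_apply, hYs s h hs, map_zero, LinearMap.zero_apply]
  have hP0v2 : P 0 ((0:F), (1:F)) = 0 := hPs 0 (by omega)
  refine ⟨?_, ?_, ?_, ?_, ?_, ?_, ?_, ?_, ?_, ?_, ?_⟩
  -- 1. e(i)e(j)
  · intro w w' _ _
    by_cases h3 : w = w'
    · subst h3
      rw [if_pos rfl, hE w]
      by_cases h1 : w = w₀
      · rw [if_pos h1, one_mul]
      · rw [if_neg h1, zero_mul]
    · rw [if_neg h3, hE w, hE w']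
      by_cases h1 : w = w₀
      · subst h1
        rw [if_pos rfl, one_mul, if_neg (fun hc => h3 hc.symm)]
      · rw [if_neg h1, zero_mul]
  -- 2. sum = 1
  · have key : ∀ a ∈ Finset.univ.filter
        (fun w : Fin d → Fin ℓ => countWt w = countWt w₀), a ≠ w₀ → E a = 0 := by
      intro a _ ha
      rw [hE a, if_neg ha]
    have mem : w₀ ∈ Finset.univ.filter
        (fun w : Fin d → Fin ℓ => countWt w = countWt w₀) :=
      Finset.mem_filter.mpr ⟨Finset.mem_univ _, rfl⟩
    rw [Finset.sum_eq_single w₀ key (fun hb => absurd mem hb), hE, if_pos rfl]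
  -- 3. y e = e y
  · intro r _ w _
    rw [hE w]
    split <;> simp
  -- 4. psi e = e psi
  · intro r hr w _
    have hswap : (w₀ ∘ Equiv.swap (⟨0, by omega⟩ : Fin d) ⟨1, by omega⟩) = w₀ := by
      funext p
      simp only [Function.comp_apply, Equiv.swap_apply_def]
      split_ifs with h h'
      · subst h; exact h01.symm
      · subst h'; exact h01
      · rfl
    rcases Nat.lt_or_ge r 1 with h | h
    · interval_cases r
      rw [hE w, hE (w ∘ _)]
      by_cases hw : w = w₀
      · subst hw
        rw [if_pos rfl, if_pos hswap, mul_one, one_mul]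
      · rw [if_neg hw, if_neg ?_, mul_zero, zero_mul]
        intro hcon
        apply hw
        rw [← hswap, ← hcon]
        funext p
        simp [Equiv.swap_apply_self]
    · rw [hPz r h hr, zero_mul, mul_zero]
  -- 5. y y
  · intro r s hr hs
    rw [hYY r s hr hs, hYY s r hs hr]
  -- 6. y psi
  · intro r s hr hs hrs hrs1
    rcases Nat.lt_or_ge s 1 with h | h
    · interval_cases s
      have hr2 : 2 ≤ r := by omega
      apply end_ext2
      · simp [Module.End.mul_apply, hP0, hYs r hr2 hr, hYv1 r hr]
      · simp [Module.End.mul_apply, hP0v2, hYs r hr2 hr]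
    · rw [hPz s h hs, zero_mul, mul_zero]
  -- 7. first y-psi commutator
  · intro r hr w _
    rw [hE w]
    by_cases hw : w = w₀
    · subst hw
      rw [if_pos rfl, mul_one]
      rcases Nat.lt_or_ge r 1 with h | h
      · interval_cases r
        rw [if_pos h01]
        apply end_ext2
        · rw [LinearMap.sub_apply, Module.End.mul_apply, Module.End.mul_apply, hP0, hY1,
            hYv1 0 (by omega), map_zero, sub_zero, Module.End.one_apply]
        · rw [LinearMap.sub_apply, Module.End.mul_apply, Module.End.mul_apply, hP0v2,
            map_zero, hY0', map_neg, hP0, zero_sub, neg_neg, Module.End.one_apply]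
      · rw [if_neg (hw_ne _ _ (by simp <;> omega) (by simp)), hPz r h hr]
        simp
    · rw [if_neg hw, mul_zero]
      split <;> simp
  -- 8. second y-psi commutator
  · intro r hr w _
    rw [hE w]
    by_cases hw : w = w₀
    · subst hw
      rw [if_pos rfl, mul_one]
      rcases Nat.lt_or_ge r 1 with h | h
      · interval_cases r
        rw [if_pos h01]
        apply end_ext2
        · rw [LinearMap.sub_apply, Module.End.mul_apply, Module.End.mul_apply, hP0, hY0',
            hYv1 1 (by omega), map_zero, sub_zero, LinearMap.neg_apply, Module.End.one_apply]
        · rw [LinearMap.sub_apply, Module.End.mul_apply, Module.End.mul_apply, hP0v2,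
            map_zero, hY1, hP0, zero_sub, LinearMap.neg_apply, Module.End.one_apply]
      · rw [if_neg (hw_ne _ _ (by simp <;> omega) (by simp)), hPz r h hr]
        simp
    · rw [if_neg hw, mul_zero]
      split <;> simp
  -- 9. psi squared
  · intro r hr w _
    rw [hE w]
    by_cases hw : w = w₀
    · subst hw
      rw [if_pos rfl, mul_one, mul_one]
      rcases Nat.lt_or_ge r 1 with h | h
      · interval_cases r
        rw [QB, if_pos h01]
        apply end_ext2
        · simp [Module.End.mul_apply, hP0, hP0v2]
        · simp [Module.End.mul_apply, hP0v2]
      · rw [hPz r h hr, zero_mul]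
        rcases Nat.lt_or_ge r 2 with h2 | h2
        · interval_cases r
          rw [QB, if_neg (hw_ne _ _ (by simp) (by simp)),
            if_pos ⟨by rw [hval 1 (by omega)]; norm_num, by rw [hval 2 (by omega)]; norm_num⟩,
            hYz 2 (by omega) (by omega), pow_two, hYY 1 1 (by omega) (by omega)]
          simp
        · rw [QB, if_neg (hw_ne _ _ (by simp <;> omega) (by simp)),
            if_neg (by rw [hval r (by omega), hval (r+1) (by omega)]; split_ifs <;> omega),
            if_neg (by rw [hval r (by omega), hval (r+1) (by omega)]; split_ifs <;> omega),
            if_pos (by rw [hval r (by omega), hval (r+1) (by omega)]; split_ifs <;> omega),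
            hYz r h2 (by omega), hYz (r+1) (by omega) (by omega)]
          simp
    · rw [if_neg hw, mul_zero, mul_zero]
  -- 10. psi psi far commutativity
  · intro r s hr hs h
    rcases h with h | h
    · rw [hPz s (by omega) hs, zero_mul, mul_zero]
    · rw [hPz r (by omega) hr, zero_mul, mul_zero]
  -- 11. braid
  · intro r hr w _
    rw [hE w]
    by_cases hw : w = w₀
    · subst hw
      rw [if_pos rfl, mul_one]
      rw [if_neg (hw_ne _ _ (by simp <;> omega) (by simp))]
      rw [hPz (r+1) (by omega) (by omega)]
      simp
    · rw [if_neg hw, mul_zero]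
      split <;> simp
end

section
/- Let F be a field and consider the Khovanov–Lauda–Rouquier algebra R_α of type G_2 (with the Cartan datum I = {1,2}, 1·1 = 2, 2·2 = 6, 1·2 = −3, so a_{12} = −3 and a_{21} = −1, and the total order 1 < 2, so that Q_{1,2}(u,v) = u³ − v), where α = 2α_1 + α_2 and d = 3. Then the following formulas define a representation of R_α on the two-dimensional F-vector space with basis {v_1, v_{−1}}: e(j) v_a = v_a if j = (1,1,2) and e(j) v_a = 0 otherwise (a = ±1); y_1 v_1 = y_2 v_1 = y_3 v_1 = 0; y_1 v_{−1} = −v_1, y_2 v_{−1} = v_1, y_3 v_{−1} = 0; ψ_1 v_1 = v_{−1}, ψ_2 v_1 = 0, ψ_1 v_{−1} = 0, ψ_2 v_{−1} = 0. -/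
/-- The polynomial `Q_{ij}(u,v)` of type `G₂` (letters `0, 1` standing for `1, 2`;
`1·1 = 2`, `2·2 = 6`, `1·2 = −3`, so `a_{12} = −3`, `a_{21} = −1`), evaluated at a pair of
commuting ring elements: `Q_{11} = Q_{22} = 0`, `Q_{1,2}(u,v) = u³ − v`,
`Q_{2,1}(u,v) = −u + v³`. -/
def QG {M : Type*} [Ring M] (i j : Fin 2) (u v : M) : M :=
  if i = j then 0
  else if (i : ℕ) = 0 then u ^ 3 - v
  else v ^ 3 - u

/-- The polynomial `(Q_{ij}(w,v) - Q_{ij}(u,v))/(w - u)` of type `G₂` (computed first as a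
polynomial), evaluated at `u = y_r`, `w = y_{r+2}`: it is `w² + wu + u²` for `(i,j) = (1,2)`,
`-1` for `(i,j) = (2,1)`, and `0` if `i = j`. -/
def QGder {M : Type*} [Ring M] (i j : Fin 2) (u w : M) : M :=
  if i = j then 0
  else if (i : ℕ) = 0 then w ^ 2 + w * u + u ^ 2
  else -1

lemma classify : ∀ w : Fin 3 → Fin 2,
    countWt w = countWt ![0,0,1] ↔ (w = ![0,0,1] ∨ w = ![0,1,0] ∨ w = ![1,0,0]) := by
  decide

lemma ext2 {F : Type*} [Field F] {f g : Module.End F (F × F)}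
    (h1 : f (1, 0) = g (1, 0)) (h2 : f (0, 1) = g (0, 1)) : f = g := by
  apply LinearMap.ext
  intro x
  have hx : x = x.1 • ((1:F), (0:F)) + x.2 • ((0:F), (1:F)) := by
    simp [Prod.ext_iff]
  rw [hx, map_add, map_add, map_smul, map_smul, map_smul, map_smul, h1, h2]

/-- For the KLR algebra `R_α` of type `G₂` with `α = 2α_1 + α_2` (`d = 3`),
the formulas `e((1,1,2)) ↦ id`, `e(j) ↦ 0` for other `j ∈ W^α`; `y_1 v₁ = y_2 v₁ = y_3 v₁ = 0`;
`y_1 v₋₁ = -v₁`, `y_2 v₋₁ = v₁`, `y_3 v₋₁ = 0`; `ψ_1 v₁ = v₋₁`, `ψ_2 v₁ = 0`, `ψ_1 v₋₁ = 0`,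
`ψ_2 v₋₁ = 0` define a representation of `R_α` on the two-dimensional space `F × F` with basis
`v₁ = (1,0)`, `v₋₁ = (0,1)`, i.e. satisfy all the defining relations of `R_α`.
(Letters are `0`-indexed: letter `k ∈ {1, 2}` is `⟨k-1, _⟩ : Fin 2`; `y_1, y_2, y_3` are
`Y 0, Y 1, Y 2` and `ψ_1, ψ_2` are `P 0, P 1`.) -/
theorem KLR_typeG2_cuspidal_two_dimensional (F : Type*) [Field F]
    (w₀ : Fin 3 → Fin 2)
    (hw₀ : ∀ p : Fin 3, (w₀ p : ℕ) = if (p : ℕ) ≤ 1 then 0 else 1)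
    (E : (Fin 3 → Fin 2) → Module.End F (F × F))
    (hE : ∀ w, E w = if w = w₀ then 1 else 0)
    (Y P : ℕ → Module.End F (F × F))
    (hYv1 : ∀ r, r < 3 → Y r ((1 : F), (0 : F)) = 0)
    (hY0 : Y 0 ((0 : F), (1 : F)) = (-1, 0))
    (hY1 : Y 1 ((0 : F), (1 : F)) = (1, 0))
    (hY2 : Y 2 ((0 : F), (1 : F)) = 0)
    (hP0v1 : P 0 ((1 : F), (0 : F)) = (0, 1))
    (hP1v1 : P 1 ((1 : F), (0 : F)) = 0)
    (hP0v2 : P 0 ((0 : F), (1 : F)) = 0)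
    (hP1v2 : P 1 ((0 : F), (1 : F)) = 0) :
    -- e(i) e(j) = δ_{i,j} e(i)
    (∀ w w' : Fin 3 → Fin 2, countWt w = countWt w₀ → countWt w' = countWt w₀ →
      E w * E w' = if w = w' then E w else 0) ∧
    -- Σ_{i ∈ W^α} e(i) = 1
    (∑ w ∈ Finset.univ.filter (fun w : Fin 3 → Fin 2 => countWt w = countWt w₀), E w = 1) ∧
    -- y_r e(i) = e(i) y_r
    (∀ r, r < 3 → ∀ w : Fin 3 → Fin 2, countWt w = countWt w₀ →
      Y r * E w = E w * Y r) ∧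
    -- ψ_r e(i) = e(s_r i) ψ_r
    (∀ r, ∀ hr : r + 1 < 3, ∀ w : Fin 3 → Fin 2, countWt w = countWt w₀ →
      P r * E w = E (w ∘ Equiv.swap (⟨r, by omega⟩ : Fin 3) ⟨r + 1, hr⟩) * P r) ∧
    -- y_r y_s = y_s y_r
    (∀ r s, r < 3 → s < 3 → Y r * Y s = Y s * Y r) ∧
    -- y_r ψ_s = ψ_s y_r for r ≠ s, s+1
    (∀ r s, r < 3 → s + 1 < 3 → r ≠ s → r ≠ s + 1 → Y r * P s = P s * Y r) ∧
    -- (y_{r+1} ψ_r - ψ_r y_r) e(i)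
    (∀ r, ∀ hr : r + 1 < 3, ∀ w : Fin 3 → Fin 2, countWt w = countWt w₀ →
      (Y (r + 1) * P r - P r * Y r) * E w =
        if w (⟨r, by omega⟩ : Fin 3) = w ⟨r + 1, hr⟩ then E w else 0) ∧
    -- (y_r ψ_r - ψ_r y_{r+1}) e(i)
    (∀ r, ∀ hr : r + 1 < 3, ∀ w : Fin 3 → Fin 2, countWt w = countWt w₀ →
      (Y r * P r - P r * Y (r + 1)) * E w =
        if w (⟨r, by omega⟩ : Fin 3) = w ⟨r + 1, hr⟩ then -E w else 0) ∧
    -- ψ_r² e(i) = Q_{i_r, i_{r+1}}(y_r, y_{r+1}) e(i)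
    (∀ r, ∀ hr : r + 1 < 3, ∀ w : Fin 3 → Fin 2, countWt w = countWt w₀ →
      P r * P r * E w =
        QG (w (⟨r, by omega⟩ : Fin 3)) (w ⟨r + 1, hr⟩) (Y r) (Y (r + 1)) * E w) ∧
    -- ψ_r ψ_s = ψ_s ψ_r for |r - s| > 1
    (∀ r s, r + 1 < 3 → s + 1 < 3 → (r + 1 < s ∨ s + 1 < r) → P r * P s = P s * P r) ∧
    -- braid relation
    (∀ r, ∀ hr : r + 2 < 3, ∀ w : Fin 3 → Fin 2, countWt w = countWt w₀ →
      (P (r + 1) * P r * P (r + 1) - P r * P (r + 1) * P r) * E w =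
        if w (⟨r, by omega⟩ : Fin 3) = w ⟨r + 2, hr⟩ then
          QGder (w (⟨r, by omega⟩ : Fin 3)) (w (⟨r + 1, by omega⟩ : Fin 3))
            (Y r) (Y (r + 2)) * E w
        else 0) := by

  have hw : w₀ = ![0,0,1] := by
    funext p
    fin_cases p <;> (apply Fin.ext; rw [hw₀]) <;> rfl
  have hYa : ∀ r, r < 3 → ∀ a : F, Y r (a, 0) = 0 := by
    intro r hr a
    have h : ((a, 0) : F × F) = a • ((1:F), (0:F)) := by simp
    rw [h, map_smul, hYv1 r hr, smul_zero]
  have hP1 : P 1 = 0 := ext2 (by simp [hP1v1]) (by simp [hP1v2])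
  have hY2z : Y 2 = 0 := ext2 (by simp [hYv1 2 (by omega)]) (by simp [hY2])
  have hYY : ∀ r s, r < 3 → s < 3 → Y r * Y s = 0 := by
    intro r s hr hs
    apply ext2
    · rw [Module.End.mul_apply, hYv1 s hs, map_zero]; rfl
    · rw [Module.End.mul_apply]
      obtain ⟨a, ha⟩ : ∃ a : F, Y s (0, 1) = (a, 0) := by
        interval_cases s
        exacts [⟨-1, hY0⟩, ⟨1, hY1⟩, ⟨0, by rw [hY2]; rfl⟩]
      rw [ha, hYa r hr a]; rfl
  have h13 : Y 1 ^ 3 = 0 := by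
    rw [pow_succ, pow_succ, pow_one, hYY 1 1 (by omega) (by omega), zero_mul]
  have key7 : Y 1 * P 0 - P 0 * Y 0 = 1 := by
    apply ext2 <;> simp only [LinearMap.sub_apply, Module.End.mul_apply, Module.End.one_apply]
    · rw [hP0v1, hY1, hYv1 0 (by omega), map_zero, sub_zero]
    · rw [hP0v2, hY0, map_zero]
      have h : ((-1, 0) : F × F) = -(1, 0) := by norm_num
      rw [h, map_neg, hP0v1]
      simp
  have key8 : Y 0 * P 0 - P 0 * Y 1 = -1 := by
    apply ext2 <;> simp only [LinearMap.sub_apply, Module.End.mul_apply, LinearMap.neg_apply,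
      Module.End.one_apply]
    · rw [hP0v1, hY0, hYv1 1 (by omega), map_zero, sub_zero]
      norm_num
    · rw [hP0v2, hY1, hP0v1, map_zero, zero_sub]
  have hP00 : P 0 * P 0 = 0 := by
    apply ext2 <;> simp only [Module.End.mul_apply, LinearMap.zero_apply]
    · rw [hP0v1, hP0v2]
    · rw [hP0v2, map_zero]
  refine ⟨?_, ?_, ?_, ?_, ?_, ?_, ?_, ?_, ?_, ?_, ?_⟩
  · -- e(i) e(j)
    intro w w' _ _
    rw [hE w, hE w']
    by_cases h : w = w₀ <;> by_cases h' : w' = w₀ <;>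
      simp_all <;> simp [Ne.symm h']
  · -- sum = 1
    rw [Finset.sum_congr rfl (fun w _ => hE w), Finset.sum_ite_eq']
    simp
  · -- y e = e y
    intro r hr w _
    rw [hE]
    split_ifs <;> simp
  · -- psi e = e(s.i) psi
    intro r hr w hcw
    have hcw' := (classify w).mp (by rw [← hw]; exact hcw)
    have hr' : r < 2 := by omega
    interval_cases r <;> rcases hcw' with rfl | rfl | rfl <;>
      simp only [hE, hw, Nat.reduceAdd, Fin.mk_zero, Fin.mk_one,
        show ((⟨2, by omega⟩ : Fin 3)) = 2 from rfl] <;> split_ifs with h1 h2 h3 h4 h5 h6 <;>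
      first
        | exact absurd h1 (by decide)
        | exact absurd (by decide) h1
        | exact absurd h2 (by decide)
        | exact absurd (by decide) h2
        | exact absurd h3 (by decide)
        | exact absurd (by decide) h3
        | exact absurd h4 (by decide)
        | exact absurd (by decide) h4
        | exact absurd h5 (by decide)
        | exact absurd (by decide) h5
        | exact absurd h6 (by decide)
        | exact absurd (by decide) h6
        | simp [hP1]
        | simp_all (config := { decide := true }) [hP1]
  · -- y y commute
    intro r s hr hs
    rw [hYY r s hr hs, hYY s r hs hr]
  · -- y psi commute
    intro r s hr hs hne1 hne2
    have hs' : s < 2 := by omega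
    interval_cases s <;> interval_cases r <;>
      first
        | omega
        | simp [hY2z, hP1]
  · -- relation 7
    intro r hr w hcw
    have hcw' := (classify w).mp (by rw [← hw]; exact hcw)
    have hr' : r < 2 := by omega
    interval_cases r <;> rcases hcw' with rfl | rfl | rfl <;>
      simp only [hE, hw, Nat.reduceAdd, Fin.mk_zero, Fin.mk_one,
        show ((⟨2, by omega⟩ : Fin 3)) = 2 from rfl] <;> split_ifs with h1 h2 h3 h4 h5 h6 <;>
      first
        | exact absurd h1 (by decide)
        | exact absurd (by decide) h1
        | exact absurd h2 (by decide)
        | exact absurd (by decide) h2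
        | exact absurd h3 (by decide)
        | exact absurd (by decide) h3
        | exact absurd h4 (by decide)
        | exact absurd (by decide) h4
        | exact absurd h5 (by decide)
        | exact absurd (by decide) h5
        | exact absurd h6 (by decide)
        | exact absurd (by decide) h6
        | simp [key7, hP1, hY2z]
        | simp_all (config := { decide := true }) [key7, hP1, hY2z]
  · -- relation 8
    intro r hr w hcw
    have hcw' := (classify w).mp (by rw [← hw]; exact hcw)
    have hr' : r < 2 := by omega
    interval_cases r <;> rcases hcw' with rfl | rfl | rfl <;>
      simp only [hE, hw, Nat.reduceAdd, Fin.mk_zero, Fin.mk_one,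
        show ((⟨2, by omega⟩ : Fin 3)) = 2 from rfl] <;> split_ifs with h1 h2 h3 h4 h5 h6 <;>
      first
        | exact absurd h1 (by decide)
        | exact absurd (by decide) h1
        | exact absurd h2 (by decide)
        | exact absurd (by decide) h2
        | exact absurd h3 (by decide)
        | exact absurd (by decide) h3
        | exact absurd h4 (by decide)
        | exact absurd (by decide) h4
        | exact absurd h5 (by decide)
        | exact absurd (by decide) h5
        | exact absurd h6 (by decide)
        | exact absurd (by decide) h6
        | simp [key8, hP1, hY2z]
        | simp_all (config := { decide := true }) [key8, hP1, hY2z]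
  · -- psi^2 = Q
    intro r hr w hcw
    have hcw' := (classify w).mp (by rw [← hw]; exact hcw)
    have hr' : r < 2 := by omega
    have hQ1 : QG (0:Fin 2) 0 (Y 0) (Y 1) = 0 := by simp [QG]
    have hQ2 : QG (0:Fin 2) 1 (Y 1) (Y 2) = Y 1 ^ 3 - Y 2 := by
      have h01 : (0:Fin 2) ≠ 1 := by decide
      simp [QG, h01]
    interval_cases r
    · rcases hcw' with rfl | rfl | rfl
      · simp only [hE, hw, Nat.reduceAdd]
        rw [if_pos trivial]
        show P 0 * P 0 * 1 = QG 0 0 (Y 0) (Y 1) * 1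
        rw [hP00, hQ1]
      · simp only [hE, hw, Nat.reduceAdd]
        rw [if_neg (by decide)]
        simp
      · simp only [hE, hw, Nat.reduceAdd]
        rw [if_neg (by decide)]
        simp
    · rcases hcw' with rfl | rfl | rfl
      · simp only [hE, hw, Nat.reduceAdd]
        rw [if_pos trivial]
        show P 1 * P 1 * 1 = QG 0 1 (Y 1) (Y 2) * 1
        rw [hQ2, hP1, hY2z, h13]
        simp
      · simp only [hE, hw, Nat.reduceAdd]
        rw [if_neg (by decide)]
        simp
      · simp only [hE, hw, Nat.reduceAdd]
        rw [if_neg (by decide)]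
        simp
  · -- far commutativity (vacuous)
    intro r s hr hs h
    omega
  · -- braid relation
    intro r hr w hcw
    have hcw' := (classify w).mp (by rw [← hw]; exact hcw)
    have hr' : r < 1 := by omega
    interval_cases r <;> rcases hcw' with rfl | rfl | rfl <;>
      simp only [hE, hw, Nat.reduceAdd, Fin.mk_zero, Fin.mk_one,
        show ((⟨2, by omega⟩ : Fin 3)) = 2 from rfl] <;> split_ifs with h1 h2 h3 h4 h5 h6 <;>
      first
        | exact absurd h1 (by decide)
        | exact absurd (by decide) h1
        | exact absurd h2 (by decide)
        | exact absurd (by decide) h2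
        | exact absurd h3 (by decide)
        | exact absurd (by decide) h3
        | exact absurd h4 (by decide)
        | exact absurd (by decide) h4
        | exact absurd h5 (by decide)
        | exact absurd (by decide) h5
        | exact absurd h6 (by decide)
        | exact absurd (by decide) h6
        | simp [hP1]
        | simp_all (config := { decide := true }) [hP1]
end
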